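/- The toric code C_b has length (q−1)² and dimension dim_{𝔽_q} C_b = (1/2)((q−2)/r + 1)·q + b·(q−1), i.e. its dimension equals the number of lattice points of □_b. -/

import Mathlib

/-- The toric code `C_b` over the finite field `F` with `q` elements: the `𝔽_q`-linear
span in `𝔽_q^S`, `S = 𝔽_q^* × 𝔽_q^*`, of the evaluation vectors `v_{(i,j)}` (with
coordinate `t₁^i · t₂^j` at `(t₁,t₂) ∈ S`) for `(i,j)` ranging over the lattice points
of the polytope `□_b`, i.e. the pairs `(i,j) ∈ ℤ²` with `i ≥ 0`, `0 ≤ j ≤ q-2` and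
`r·i + j ≤ r·b + (q-2)`. -/
def toricCode (F : Type*) [Field F] [Fintype F] (r b : ℕ) : Submodule F (Fˣ × Fˣ → F) :=
  Submodule.span F
    {f : Fˣ × Fˣ → F | ∃ i j : ℕ, j ≤ Fintype.card F - 2 ∧
      r * i + j ≤ r * b + (Fintype.card F - 2) ∧
      f = fun t : Fˣ × Fˣ => (t.1 : F) ^ i * (t.2 : F) ^ j}

/-- The monomial evaluation monoid hom. -/
def toricMono (F : Type*) [Field F] (i j : ℕ) : (Fˣ × Fˣ) →* F where
  toFun t := (t.1 : F) ^ i * (t.2 : F) ^ j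
  map_one' := by simp
  map_mul' x y := by
    simp only [Prod.fst_mul, Prod.snd_mul, Units.val_mul, mul_pow]
    ring

lemma toricPow_inj {F : Type*} [Field F] [Fintype F] {i i' : ℕ}
    (hi : i < Fintype.card F - 1) (hi' : i' < Fintype.card F - 1)
    (h : ∀ t : Fˣ, (t : F) ^ i = (t : F) ^ i') : i = i' := by
  classical
  obtain ⟨g, hg⟩ := IsCyclic.exists_generator (α := Fˣ)
  have hord : orderOf g = Fintype.card F - 1 := by
    rw [orderOf_eq_card_of_forall_mem_zpowers hg, Nat.card_eq_fintype_card,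
      Fintype.card_units]
  have hgp : g ^ i = g ^ i' := Units.ext (by
    rw [Units.val_pow_eq_pow_val, Units.val_pow_eq_pow_val]; exact h g)
  rw [pow_eq_pow_iff_modEq, hord] at hgp
  rwa [Nat.ModEq, Nat.mod_eq_of_lt hi, Nat.mod_eq_of_lt hi'] at hgp

/-- Let `q` be a prime power, `r` a positive integer dividing `q-2`,
and `b` an integer with `0 ≤ b` and `a := b + (q-2)/r ≤ q-2`.  The toric code `C_b`
has length `(q-1)²` and dimension `(1/2)·((q-2)/r + 1)·q + b·(q-1)` (the number of
lattice points of `□_b`). -/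
theorem toricCode_length_and_dim
    {F : Type*} [Field F] [Fintype F] (q : ℕ) (hq : q = Fintype.card F)
    (r b : ℕ) (hr : 0 < r) (hdvd : r ∣ (q - 2))
    (ha : b + (q - 2) / r ≤ q - 2) :
    Nat.card (Fˣ × Fˣ) = (q - 1) ^ 2 ∧
    ((Module.finrank F (toricCode F r b) : ℚ)
      = (1 / 2) * (((q : ℚ) - 2) / (r : ℚ) + 1) * (q : ℚ)
        + (b : ℚ) * ((q : ℚ) - 1)) := by
  classical
  have hq2 : 2 ≤ q := hq ▸ Fintype.one_lt_card
  obtain ⟨s, hs⟩ := hdvd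
  have hsdiv : (q - 2) / r = s := by rw [hs, Nat.mul_div_cancel_left _ hr]
  rw [hsdiv] at ha
  constructor
  · simp [Nat.card_eq_fintype_card, Fintype.card_units, ← hq, sq]
  -- the index finset
  set T : Finset (Σ _ : ℕ, ℕ) :=
    (Finset.range (b + s + 1)).sigma
      (fun i => Finset.range (min (r * (b + s) - r * i + 1) (q - 1))) with hT
  set ψ : (Σ _ : ℕ, ℕ) → (Fˣ × Fˣ → F) := fun p => ⇑(toricMono F p.1 p.2) with hψ
  -- the spanning set equals the image of T
  have hset : {f : Fˣ × Fˣ → F | ∃ i j : ℕ, j ≤ Fintype.card F - 2 ∧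
      r * i + j ≤ r * b + (Fintype.card F - 2) ∧
      f = fun t : Fˣ × Fˣ => (t.1 : F) ^ i * (t.2 : F) ^ j} = ψ '' ↑T := by
    ext f
    constructor
    · rintro ⟨i, j, hj, hij, rfl⟩
      rw [← hq] at hj hij
      refine ⟨⟨i, j⟩, ?_, rfl⟩
      have h1 : r * i + j ≤ r * (b + s) := by
        rw [Nat.mul_add, ← hs]; exact hij
      have h2 : i ≤ b + s :=
        Nat.le_of_mul_le_mul_left (le_trans (Nat.le_add_right _ j) h1) hr
      simp only [hT, Finset.mem_coe, Finset.mem_sigma, Finset.mem_range]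
      exact ⟨by omega, by omega⟩
    · rintro ⟨⟨i, j⟩, hp, rfl⟩
      simp only [hT, Finset.mem_coe, Finset.mem_sigma, Finset.mem_range] at hp
      obtain ⟨hi, hj⟩ := hp
      have h2 : i ≤ b + s := by omega
      have h5 : r * i ≤ r * (b + s) := Nat.mul_le_mul (le_refl r) h2
      refine ⟨i, j, by rw [← hq]; omega, ?_, rfl⟩
      rw [← hq]
      have h6 : r * i + j ≤ r * (b + s) := by omega
      rw [Nat.mul_add, ← hs] at h6
      exact h6
  -- injectivity on T
  have hinj : Function.Injective (fun p : ↥T => toricMono F p.1.1 p.1.2) := by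
    rintro ⟨⟨i, j⟩, hp⟩ ⟨⟨i', j'⟩, hp'⟩ h
    simp only [hT, Finset.mem_sigma, Finset.mem_range] at hp hp'
    have hfun : ∀ t : Fˣ × Fˣ, (t.1 : F) ^ i * (t.2 : F) ^ j
        = (t.1 : F) ^ i' * (t.2 : F) ^ j' := fun t =>
      congrFun (congrArg (fun g : (Fˣ × Fˣ) →* F => ⇑g) h) t
    have hii : i = i' := by
      have hb1 : i < Fintype.card F - 1 := by rw [← hq]; omega
      have hb2 : i' < Fintype.card F - 1 := by rw [← hq]; omega
      exact toricPow_inj hb1 hb2 (fun t => by simpa using hfun (t, 1))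
    have hjj : j = j' := by
      have hb1 : j < Fintype.card F - 1 := by rw [← hq]; omega
      have hb2 : j' < Fintype.card F - 1 := by rw [← hq]; omega
      exact toricPow_inj hb1 hb2 (fun t => by simpa using hfun (1, t))
    subst hii; subst hjj; rfl
  -- linear independence
  have hli : LinearIndependent F (fun p : ↥T => ψ p.1) :=
    (linearIndependent_monoidHom (Fˣ × Fˣ) F).comp
      (fun p : ↥T => toricMono F p.1.1 p.1.2) hinj
  have hrange : Set.range (fun p : ↥T => ψ p.1) = ψ '' ↑T :=
    (Set.image_eq_range _ _).symm
  have hfr : Module.finrank F (toricCode F r b) = T.card := by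
    rw [toricCode, hset, ← hrange, finrank_span_eq_card hli, Fintype.card_coe]
  rw [hfr]
  -- counting
  have hcardT : T.card = (b + 1) * (r * s + 1) + (r * (∑ k ∈ Finset.range s, k) + s) := by
    rw [hT, Finset.card_sigma]
    simp only [Finset.card_range]
    rw [show b + s + 1 = (b + 1) + s by ring, Finset.sum_range_add]
    congr 1
    · have h1 : ∀ i ∈ Finset.range (b + 1),
          min (r * (b + s) - r * i + 1) (q - 1) = r * s + 1 := by
        intro i hi
        rw [Finset.mem_range] at hi
        have h2 : i ≤ b := by omega
        have h3 : r * s ≤ r * ((b + s) - i) := Nat.mul_le_mul (le_refl r) (by omega)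
        rw [Nat.mul_sub] at h3
        omega
      rw [Finset.sum_congr rfl h1, Finset.sum_const, Finset.card_range, smul_eq_mul]
    · have h1 : ∀ k ∈ Finset.range s,
          min (r * (b + s) - r * (b + 1 + k) + 1) (q - 1) = r * (s - 1 - k) + 1 := by
        intro k hk
        rw [Finset.mem_range] at hk
        have h2 : r * (s - 1 - k) ≤ r * s := Nat.mul_le_mul (le_refl r) (by omega)
        have h3 : r * (b + s) - r * (b + 1 + k) = r * ((b + s) - (b + 1 + k)) :=
          (Nat.mul_sub ..).symm
        have h4 : (b + s) - (b + 1 + k) = s - 1 - k := by omega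
        rw [h3, h4]
        omega
      rw [Finset.sum_congr rfl h1, Finset.sum_add_distrib, Finset.sum_const,
        Finset.card_range, smul_eq_mul, mul_one, ← Finset.mul_sum,
        Finset.sum_range_reflect (fun x => x) s]
  rw [hcardT]
  -- the rational identity
  have hq' : q = r * s + 2 := by omega
  have hgauss : (∑ k ∈ Finset.range s, (k : ℚ)) * 2 = (s : ℚ) * ((s : ℚ) - 1) := by
    rcases Nat.eq_zero_or_pos s with h | h
    · subst h; simp
    · have h1 := Finset.sum_range_id_mul_two s
      have h2 : ((∑ k ∈ Finset.range s, k : ℕ) : ℚ) * 2 = ((s * (s - 1) : ℕ) : ℚ) := by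
        exact_mod_cast congrArg (Nat.cast : ℕ → ℚ) h1
      rw [Nat.cast_sum] at h2
      rw [h2]
      push_cast [Nat.cast_sub h]
      ring
  have hrQ : (r : ℚ) ≠ 0 := Nat.cast_ne_zero.mpr hr.ne'
  rw [hq']
  push_cast
  have hdiv : ((r : ℚ) * s + 2 - 2) / r = s := by field_simp; ring
  rw [hdiv]
  linear_combination ((r : ℚ) / 2) * hgauss
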